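/- Let X be a finite multigraph, c a feasible circulation function on X, and e a directed edge of X. Then e is c-forced or c-forbidden if and only if the endpoints of e belong to the same accessibility class of c. -/

import Mathlib

/-- A finite multigraph: vertices, edges, and two endpoint maps. -/
structure Multigraph where
  V : Type
  E : Type
  src : E → V
  tgt : E → V

namespace Multigraph

/-- A (non-null) directed cycle of length `n`: a cyclic sequence of edges, each
with a direction of traversal (`true` = from `src` to `tgt`), such that the head
of each directed edge is the tail of the next. -/
structure DCycle (X : Multigraph) where
  n : ℕ
  npos : 0 < n
  edge : ZMod n → X.E
  dir : ZMod n → Bool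
  head_eq_tail : ∀ i : ZMod n,
    (cond (dir i) (X.tgt (edge i)) (X.src (edge i))) =
    (cond (dir (i + 1)) (X.src (edge (i + 1))) (X.tgt (edge (i + 1))))

/-- An orientation of a multigraph: a choice of direction for each edge
(`true` = oriented from `src` to `tgt`). -/
abbrev Orientation (X : Multigraph) := X.E → Bool

/-- The circulation of an orientation `R` around a directed cycle: the number of
edges of the cycle traversed in agreement with `R` minus the number traversed
in disagreement. -/
def circulation (X : Multigraph) (R : X.Orientation) (C : X.DCycle) : ℤ :=
  haveI : NeZero C.n := ⟨C.npos.ne'⟩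
  ∑ i : ZMod C.n, if C.dir i = R (C.edge i) then (1 : ℤ) else -1

/-- A directed cycle is forward relative to `R` if all its edges are traversed
in agreement with `R`. -/
def IsForward (X : Multigraph) (R : X.Orientation) (C : X.DCycle) : Prop :=
  ∀ i : ZMod C.n, C.dir i = R (C.edge i)

/-- One step along an edge in the direction given by the orientation `R`. -/
def Step (X : Multigraph) (R : X.Orientation) (x y : X.V) : Prop :=
  ∃ e : X.E, (R e = true ∧ X.src e = x ∧ X.tgt e = y) ∨
    (R e = false ∧ X.tgt e = x ∧ X.src e = y)

/-- `y` is accessible from `x` relative to `R`: there is a (possibly null)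
forward path from `x` to `y`. -/
def Accessible (X : Multigraph) (R : X.Orientation) : X.V → X.V → Prop :=
  Relation.ReflTransGen (X.Step R)

/-- `x` and `y` are mutually accessible relative to `R` (the equivalence relation
whose classes are the accessibility classes). -/
def MutuallyAccessible (X : Multigraph) (R : X.Orientation) (x y : X.V) : Prop :=
  X.Accessible R x y ∧ X.Accessible R y x

end Multigraph

namespace Multigraph

/-- The directed edge `(e, b)` is `c`-forced: it belongs to (i.e. agrees with)
every orientation with circulation function `c`. -/
def CForced (X : Multigraph) (c : X.DCycle → ℤ) (e : X.E) (b : Bool) : Prop :=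
  ∀ R : X.Orientation, (∀ C : X.DCycle, X.circulation R C = c C) → R e = b

/-- The directed edge `(e, b)` is `c`-forbidden: it belongs to no orientation with
circulation function `c`. -/
def CForbidden (X : Multigraph) (c : X.DCycle → ℤ) (e : X.E) (b : Bool) : Prop :=
  ∀ R : X.Orientation, (∀ C : X.DCycle, X.circulation R C = c C) → R e ≠ b

end Multigraph

namespace Multigraph

variable (X : Multigraph)

/-- Tail of an edge relative to an orientation. -/
def Rtail (R : X.Orientation) (f : X.E) : X.V := cond (R f) (X.src f) (X.tgt f)
/-- Head of an edge relative to an orientation. -/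
def Rhead (R : X.Orientation) (f : X.E) : X.V := cond (R f) (X.tgt f) (X.src f)

lemma step_of_edge (R : X.Orientation) (f : X.E) :
    X.Step R (X.Rtail R f) (X.Rhead R f) := by
  refine ⟨f, ?_⟩
  cases h : R f
  · exact Or.inr ⟨rfl, by simp [Rtail, h], by simp [Rhead, h]⟩
  · exact Or.inl ⟨rfl, by simp [Rtail, h], by simp [Rhead, h]⟩

lemma step_iff (R : X.Orientation) (x y : X.V) :
    X.Step R x y ↔ ∃ f, X.Rtail R f = x ∧ X.Rhead R f = y := by
  constructor
  · rintro ⟨f, ⟨h, h1, h2⟩ | ⟨h, h1, h2⟩⟩ <;>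
      exact ⟨f, by simp [Rtail, Rhead, h, h1, h2]⟩
  · rintro ⟨f, rfl, rfl⟩; exact X.step_of_edge R f

/-- Forward walk along an orientation, recorded as a list of edges. -/
def IsWalk (X : Multigraph) (R : X.Orientation) : X.V → X.V → List X.E → Prop
  | x, y, [] => x = y
  | x, y, f :: L => X.Rtail R f = x ∧ IsWalk X R (X.Rhead R f) y L

lemma accessible_walk {R : X.Orientation} {x y : X.V} (h : X.Accessible R x y) :
    ∃ L, X.IsWalk R x y L := by
  induction h using Relation.ReflTransGen.head_induction_on with
  | refl => exact ⟨[], rfl⟩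
  | head hstep _ ih =>
    obtain ⟨L, hL⟩ := ih
    obtain ⟨f, hf1, hf2⟩ := (X.step_iff R _ _).1 hstep
    exact ⟨f :: L, hf1, hf2 ▸ hL⟩

lemma walk_tail0 {R : X.Orientation} {L : List X.E} {x y : X.V}
    (hw : X.IsWalk R x y L) (h : 0 < L.length) :
    X.Rtail R (L.get ⟨0, h⟩) = x := by
  cases L with
  | nil => simp at h
  | cons f L => exact hw.1

lemma walk_chain {R : X.Orientation} {L : List X.E} {x y : X.V}
    (hw : X.IsWalk R x y L) :
    ∀ k (h : k + 1 < L.length),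
      X.Rhead R (L.get ⟨k, Nat.lt_of_succ_lt h⟩) = X.Rtail R (L.get ⟨k+1, h⟩) := by
  induction L generalizing x with
  | nil => intro k h; simp at h
  | cons f L ih =>
    intro k h
    cases k with
    | zero =>
      simp only [List.get_cons_zero, List.get_cons_succ]
      exact (X.walk_tail0 hw.2 (by simpa using h)).symm
    | succ k =>
      simp only [List.get_cons_succ]
      exact ih hw.2 k (Nat.lt_of_succ_lt_succ h)

lemma walk_last {R : X.Orientation} {L : List X.E} {x y : X.V}
    (hw : X.IsWalk R x y L) (h : L ≠ []) :
    X.Rhead R (L.getLast h) = y := by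
  induction L generalizing x with
  | nil => exact absurd rfl h
  | cons f L ih =>
    cases L with
    | nil =>
      have h' : X.Rhead R f = y := hw.2
      simpa [List.getLast] using h'
    | cons g L => simpa [List.getLast] using ih hw.2 (by simp)

lemma exists_forward_cycle {R : X.Orientation} {x : X.V} {f : X.E} {L : List X.E}
    (hw : X.IsWalk R x x (f :: L)) :
    ∃ C : X.DCycle, X.IsForward R C ∧ ∃ i : ZMod C.n, C.edge i = f := by
  set M := f :: L with hM
  have hlen : 0 < M.length := by simp [hM]
  haveI : NeZero M.length := ⟨hlen.ne'⟩
  have main : ∀ (k₁ k₂ : ℕ) (h1 : k₁ < M.length) (h2 : k₂ < M.length),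
      (k₁ + 1) % M.length = k₂ →
      X.Rhead R (M.get ⟨k₁, h1⟩) = X.Rtail R (M.get ⟨k₂, h2⟩) := by
    intro k₁ k₂ h1 h2 hk
    rcases eq_or_lt_of_le (Nat.succ_le_of_lt h1) with heq | hlt
    · -- wrap around
      have heq' : k₁ + 1 = M.length := heq
      have hk2 : k₂ = 0 := by rw [heq', Nat.mod_self] at hk; omega
      subst hk2
      have hk1 : k₁ = M.length - 1 := by omega
      subst hk1
      have hlast : M.get ⟨M.length - 1, h1⟩ = M.getLast (by simp [hM]) := by
        rw [List.getLast_eq_getElem, List.get_eq_getElem]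
      rw [hlast, X.walk_last hw, X.walk_tail0 hw]
    · have hk2 : k₂ = k₁ + 1 := by rw [Nat.mod_eq_of_lt hlt] at hk; omega
      subst hk2
      exact X.walk_chain hw k₁ h2
  refine ⟨⟨M.length, hlen,
      fun i => M.get ⟨i.val, ZMod.val_lt i⟩,
      fun i => R (M.get ⟨i.val, ZMod.val_lt i⟩), ?_⟩, fun i => rfl, ⟨0, ?_⟩⟩
  · intro i
    show X.Rhead R (M.get ⟨i.val, _⟩) = X.Rtail R (M.get ⟨(i+1).val, _⟩)
    apply main
    rw [ZMod.val_add, ZMod.val_one_eq_one_mod, Nat.add_mod_mod]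
  · show M.get ⟨(0 : ZMod M.length).val, ZMod.val_lt _⟩ = f
    simp [ZMod.val_zero, hM]

lemma forward_circulation {R : X.Orientation} {C : X.DCycle} (h : X.IsForward R C) :
    X.circulation R C = C.n := by
  haveI : NeZero C.n := ⟨C.npos.ne'⟩
  unfold circulation
  rw [Finset.sum_congr rfl (fun i _ => if_pos (h i))]
  simp [Finset.card_univ, ZMod.card]

lemma eq_of_forward_circ {R R' : X.Orientation} {C : X.DCycle} (hf : X.IsForward R C)
    (h : X.circulation R' C = X.circulation R C) (i : ZMod C.n) :
    R' (C.edge i) = C.dir i := by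
  haveI : NeZero C.n := ⟨C.npos.ne'⟩
  by_contra hne
  have hterm : (if C.dir i = R' (C.edge i) then (1:ℤ) else -1) = -1 := by
    rw [if_neg]; exact fun h' => hne h'.symm
  have hlt : X.circulation R' C < (C.n : ℤ) := by
    have h2 : X.circulation R' C < ∑ _j : ZMod C.n, (1:ℤ) := by
      unfold circulation
      apply Finset.sum_lt_sum
      · intro j _; split <;> omega
      · exact ⟨i, Finset.mem_univ i, by rw [hterm]; norm_num⟩
    simpa [Finset.card_univ, ZMod.card] using h2
  rw [h, X.forward_circulation hf] at hlt
  exact lt_irrefl _ hlt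

open Classical in
/-- Flip every edge with exactly one endpoint in `A`. -/
noncomputable def flip (R : X.Orientation) (A : X.V → Prop) : X.Orientation :=
  fun f => if (A (X.src f) ↔ A (X.tgt f)) then R f else !R f

lemma circ_flip (R : X.Orientation) (A : X.V → Prop)
    (hA : ∀ f : X.E, A (X.Rtail R f) → A (X.Rhead R f)) (C : X.DCycle) :
    X.circulation (X.flip R A) C = X.circulation R C := by
  classical
  haveI : NeZero C.n := ⟨C.npos.ne'⟩
  have key : ∀ i : ZMod C.n,
      (if C.dir i = X.flip R A (C.edge i) then (1:ℤ) else -1)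
      = (if C.dir i = R (C.edge i) then (1:ℤ) else -1) +
        ((if A (cond (C.dir i) (X.src (C.edge i)) (X.tgt (C.edge i))) then (2:ℤ) else 0)
        - (if A (cond (C.dir i) (X.tgt (C.edge i)) (X.src (C.edge i))) then (2:ℤ) else 0)) := by
    intro i
    have hf := hA (C.edge i)
    simp only [Rtail, Rhead] at hf
    by_cases h1 : A (X.src (C.edge i)) <;> by_cases h2 : A (X.tgt (C.edge i))
    · have hflip : X.flip R A (C.edge i) = R (C.edge i) := by
        simp [Multigraph.flip, h1, h2]
      rw [hflip]
      cases hd : C.dir i <;> simp_all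
    · have hflip : X.flip R A (C.edge i) = !R (C.edge i) := by
        simp [Multigraph.flip, h1, h2]
      rw [hflip]
      cases hd : C.dir i <;> cases hr : R (C.edge i) <;> simp_all
    · have hflip : X.flip R A (C.edge i) = !R (C.edge i) := by
        simp [Multigraph.flip, h1, h2]
      rw [hflip]
      cases hd : C.dir i <;> cases hr : R (C.edge i) <;> simp_all
    · have hflip : X.flip R A (C.edge i) = R (C.edge i) := by
        simp [Multigraph.flip, h1, h2]
      rw [hflip]
      cases hd : C.dir i <;> simp_all
  have hsum : ∑ i : ZMod C.n,
      (if A (cond (C.dir i) (X.tgt (C.edge i)) (X.src (C.edge i))) then (2:ℤ) else 0)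
      = ∑ i : ZMod C.n,
      (if A (cond (C.dir i) (X.src (C.edge i)) (X.tgt (C.edge i))) then (2:ℤ) else 0) := by
    apply Fintype.sum_equiv (Equiv.addRight (1 : ZMod C.n))
    intro i
    simp only [Equiv.coe_addRight]
    rw [C.head_eq_tail i]
    congr 1
  unfold circulation
  rw [Finset.sum_congr rfl (fun i _ => key i), Finset.sum_add_distrib,
    Finset.sum_sub_distrib, hsum]
  ring

end Multigraph

/-- (Propp's Proposition 4, extended to loops.)  Let `c` be a feasible
circulation function and `(e, b)` a directed edge.  Then `(e, b)` is `c`-forced or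
`c`-forbidden if and only if the endpoints of `e` belong to the same accessibility
class of `c` (i.e. are mutually accessible relative to every — equivalently, some —
orientation with circulation `c`). -/
theorem forced_or_forbidden_iff_same_accessibility_class
    (X : Multigraph) [Fintype X.V] [Fintype X.E]
    (c : X.DCycle → ℤ)
    (hc : ∃ R : X.Orientation, ∀ C : X.DCycle, X.circulation R C = c C)
    (e : X.E) (b : Bool) :
    (X.CForced c e b ∨ X.CForbidden c e b) ↔
    (∀ R : X.Orientation, (∀ C : X.DCycle, X.circulation R C = c C) →
      X.MutuallyAccessible R (X.src e) (X.tgt e)) := by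
  constructor
  · -- forced or forbidden → mutual accessibility in every such orientation
    intro hfb R hR
    have hsame : ∀ R' : X.Orientation, (∀ C, X.circulation R' C = c C) → R' e = R e := by
      intro R' hR'
      rcases hfb with hforced | hforb
      · rw [hforced R' hR', hforced R hR]
      · have h1 := hforb R' hR'
        have h2 := hforb R hR
        cases hb1 : R' e <;> cases hb2 : R e <;> simp_all
    cases hre : R e with
    | true =>
      have hstep : X.Step R (X.src e) (X.tgt e) := ⟨e, Or.inl ⟨hre, rfl, rfl⟩⟩
      refine ⟨Relation.ReflTransGen.single hstep, ?_⟩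
      by_contra hacc
      set A : X.V → Prop := X.Accessible R (X.tgt e) with hA
      have hclosed : ∀ f, A (X.Rtail R f) → A (X.Rhead R f) :=
        fun f h => h.tail (X.step_of_edge R f)
      have hcirc : ∀ C, X.circulation (X.flip R A) C = c C :=
        fun C => (X.circ_flip R A hclosed C).trans (hR C)
      have heq := hsame (X.flip R A) hcirc
      have hAt : A (X.tgt e) := Relation.ReflTransGen.refl
      simp only [Multigraph.flip] at heq
      rw [if_neg (fun hiff => hacc (hiff.2 hAt)), hre] at heq
      simp at heq
    | false =>
      have hstep : X.Step R (X.tgt e) (X.src e) := ⟨e, Or.inr ⟨hre, rfl, rfl⟩⟩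
      refine ⟨?_, Relation.ReflTransGen.single hstep⟩
      by_contra hacc
      set A : X.V → Prop := X.Accessible R (X.src e) with hA
      have hclosed : ∀ f, A (X.Rtail R f) → A (X.Rhead R f) :=
        fun f h => h.tail (X.step_of_edge R f)
      have hcirc : ∀ C, X.circulation (X.flip R A) C = c C :=
        fun C => (X.circ_flip R A hclosed C).trans (hR C)
      have heq := hsame (X.flip R A) hcirc
      have hAs : A (X.src e) := Relation.ReflTransGen.refl
      simp only [Multigraph.flip] at heq
      rw [if_neg (fun hiff => hacc (hiff.1 hAs)), hre] at heq
      simp at heq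
  · -- mutual accessibility → forced or forbidden
    intro hmut
    obtain ⟨R₀, hR₀⟩ := hc
    have hm := hmut R₀ hR₀
    have hacc : X.Accessible R₀ (X.Rhead R₀ e) (X.Rtail R₀ e) := by
      cases h : R₀ e
      · simpa [Multigraph.Rhead, Multigraph.Rtail, h] using hm.1
      · simpa [Multigraph.Rhead, Multigraph.Rtail, h] using hm.2
    obtain ⟨L, hL⟩ := X.accessible_walk hacc
    have hw : X.IsWalk R₀ (X.Rtail R₀ e) (X.Rtail R₀ e) (e :: L) := ⟨rfl, hL⟩
    obtain ⟨C, hCfwd, i₀, hi₀⟩ := X.exists_forward_cycle hw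
    have hkey : ∀ R : X.Orientation, (∀ C, X.circulation R C = c C) → R e = R₀ e := by
      intro R hR
      have hcc : X.circulation R C = X.circulation R₀ C := by rw [hR, hR₀]
      have h2 := X.eq_of_forward_circ hCfwd hcc i₀
      rw [hi₀] at h2
      rw [h2, hCfwd i₀, hi₀]
    by_cases hb : R₀ e = b
    · exact Or.inl fun R hR => (hkey R hR).trans hb
    · exact Or.inr fun R hR hcon => hb (((hkey R hR).symm).trans hcon)
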